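/- arXiv:math/0601729 — 2 statements merged into one kernel-verified Lean document; each statement's English description precedes it below -/
import Mathlib

section
/- The identity 1/(2(e^{-1}+1)) = 1/(2(e+1)) + ∑_{k ∈ ℤ} 1/((2k+1)²π² + 1) holds. -/
open Real

noncomputable section StmtAux

local instance fact_two_pos : Fact ((0:ℝ) < 2) := ⟨by norm_num⟩

/-- auxiliary periodic function: `cosh (x - 1)` written via exponentials -/
private def gAux : ℝ → ℂ := fun x => (Complex.exp (x - 1) + Complex.exp (1 - x)) / 2

private lemma gAux_cont : Continuous gAux := by
  unfold gAux; fun_prop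

private def fAux : C(AddCircle (2:ℝ), ℂ) :=
  ⟨AddCircle.liftIco 2 0 gAux, AddCircle.liftIco_continuous
    (by unfold gAux; norm_num [add_comm]) gAux_cont.continuousOn⟩

private lemma D_ne (n : ℤ) : (1 : ℂ) + (n:ℂ)^2 * (π:ℂ)^2 ≠ 0 := by
  have h : (0:ℝ) < 1 + (n:ℝ)^2 * π^2 := by positivity
  have := h.ne'
  intro hc
  apply this
  have : ((1 + (n:ℝ)^2 * π^2 : ℝ) : ℂ) = 0 := by push_cast; exact hc
  exact_mod_cast this

private lemma key_coeff (n : ℤ) :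
    fourierCoeff (⇑fAux) n =
      (Complex.exp 1 - Complex.exp (-1)) / (2 * (1 + (n:ℂ)^2 * (π:ℂ)^2)) := by
  have hf : ⇑fAux = AddCircle.liftIco 2 0 gAux := rfl
  rw [hf, fourierCoeff_liftIco_eq, fourierCoeffOn_eq_integral]
  set c₁ : ℂ := 1 - (π:ℂ) * Complex.I * n with hc₁def
  set c₂ : ℂ := -1 - (π:ℂ) * Complex.I * n with hc₂def
  have hc₁ : c₁ ≠ 0 := by
    intro h
    have := congrArg Complex.re h
    simp [hc₁def, Complex.mul_re, Complex.mul_im] at this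
  have hc₂ : c₂ ≠ 0 := by
    intro h
    have := congrArg Complex.re h
    simp [hc₂def, Complex.mul_re, Complex.mul_im] at this
  have key : ∀ x : ℝ, (fourier (-n) (x : AddCircle ((0:ℝ) + 2 - 0)) : ℂ) • gAux x =
      Complex.exp (-1) / 2 * Complex.exp (c₁ * x)
        + Complex.exp 1 / 2 * Complex.exp (c₂ * x) := by
    intro x
    rw [smul_eq_mul, fourier_coe_apply]
    unfold gAux
    rw [← mul_div_assoc, mul_add, ← Complex.exp_add, ← Complex.exp_add]
    have hA : 2*(π:ℂ)*Complex.I*((-n : ℤ):ℂ)*x/(((0:ℝ) + 2 - 0 : ℝ):ℂ) + ((x:ℂ) - 1)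
        = c₁ * x + (-1) := by
      push_cast; ring
    have hB : 2*(π:ℂ)*Complex.I*((-n : ℤ):ℂ)*x/(((0:ℝ) + 2 - 0 : ℝ):ℂ) + (1 - (x:ℂ))
        = c₂ * x + 1 := by
      push_cast; ring
    rw [mul_div_assoc (2*(π:ℂ)*Complex.I*((-n : ℤ):ℂ)) _ _] at hA hB ⊢
    rw [hA, hB, Complex.exp_add, Complex.exp_add]
    ring
  simp only [key]
  rw [intervalIntegral.integral_add (Continuous.intervalIntegrable (by fun_prop) _ _)
      (Continuous.intervalIntegrable (by fun_prop) _ _),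
    intervalIntegral.integral_const_mul, intervalIntegral.integral_const_mul,
    integral_exp_mul_complex hc₁, integral_exp_mul_complex hc₂]
  have e1 : Complex.exp (c₁ * (((0:ℝ) + 2 : ℝ):ℂ)) = Complex.exp 2 := by
    rw [show c₁ * (((0:ℝ) + 2 : ℝ):ℂ) = 2 + ((-n : ℤ):ℂ) * (2 * π * Complex.I) by
        push_cast [hc₁def]; ring,
      Complex.exp_add, Complex.exp_int_mul_two_pi_mul_I, mul_one]
  have e2 : Complex.exp (c₂ * (((0:ℝ) + 2 : ℝ):ℂ)) = Complex.exp (-2) := by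
    rw [show c₂ * (((0:ℝ) + 2 : ℝ):ℂ) = -2 + ((-n : ℤ):ℂ) * (2 * π * Complex.I) by
        push_cast [hc₂def]; ring,
      Complex.exp_add, Complex.exp_int_mul_two_pi_mul_I, mul_one]
  have e0 : ((0:ℝ):ℂ) = 0 := by norm_num
  rw [e1, e2, e0, mul_zero, Complex.exp_zero]
  have hA2 : Complex.exp 2 = Complex.exp 1 * Complex.exp 1 := by
    rw [← Complex.exp_add]; norm_num
  have hB2 : Complex.exp (-2) = Complex.exp (-1) * Complex.exp (-1) := by
    rw [← Complex.exp_add]; norm_num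
  have hsub : c₂ = c₁ - 2 := by rw [hc₁def, hc₂def]; ring
  have hD2 : (1:ℂ) + (n:ℂ)^2 * (π:ℂ)^2 = -(c₁ * (c₁ - 2)) := by
    rw [hc₁def]
    have h := Complex.I_sq
    ring_nf
    rw [show Complex.I ^ 2 = -1 from h]; ring
  have hAne := Complex.exp_ne_zero (1:ℂ)
  have hc₁' : c₁ - 2 ≠ 0 := by rw [← hsub]; exact hc₂
  clear_value c₁ c₂
  rw [Complex.real_smul, hA2, hB2, Complex.exp_neg, hD2, hsub]
  push_cast
  field_simp
  simp only [zero_mul, Complex.exp_zero]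
  ring

private def rAux : ℤ → ℝ := fun n => (Real.exp 1 - Real.exp (-1)) / (2 * (1 + (n:ℝ)^2 * π^2))

private lemma key_coeff_real (n : ℤ) : fourierCoeff (⇑fAux) n = ((rAux n : ℝ) : ℂ) := by
  rw [key_coeff]
  unfold rAux
  push_cast
  ring

private lemma summ : Summable (fourierCoeff (⇑fAux)) := by
  have h0 : Summable (fun n : ℤ => Real.exp 1 / π^2 * (1/(n:ℝ)^2)) :=
    ((summable_one_div_int_pow).2 one_lt_two).mul_left _
  apply Summable.of_norm_bounded_eventually h0
  rw [Filter.eventually_cofinite]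
  apply Set.Finite.subset (Set.finite_singleton (0:ℤ))
  intro n hn
  simp only [Set.mem_setOf_eq, Set.mem_singleton_iff]
  by_contra hn0
  apply hn
  rw [key_coeff_real, Complex.norm_real]
  have h1 : (1:ℝ) ≤ (n:ℝ)^2 := by
    have h2 : 1 ≤ |n| := Int.one_le_abs hn0
    have h3 : (1:ℝ) ≤ |(n:ℝ)| := by exact_mod_cast h2
    nlinarith [sq_abs (n:ℝ)]
  have hpi := Real.pi_pos
  have he1 := Real.exp_pos (1:ℝ)
  have hem := Real.exp_pos (-1:ℝ)
  have hC : 0 < Real.exp 1 - Real.exp (-1) := by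
    have := Real.exp_lt_exp.2 (show (-1:ℝ) < 1 by norm_num)
    linarith
  unfold rAux
  rw [Real.norm_eq_abs, abs_of_pos (by positivity),
    show Real.exp 1 / π^2 * (1/(n:ℝ)^2) = Real.exp 1 / (π^2 * (n:ℝ)^2) by ring,
    div_le_div_iff₀ (by positivity) (by positivity)]
  nlinarith [mul_nonneg he1.le (mul_nonneg (sq_nonneg (n:ℝ)) (sq_nonneg π)),
    mul_nonneg hem.le (mul_nonneg (sq_nonneg (n:ℝ)) (sq_nonneg π)), he1.le]

private lemma fAux_apply {x : ℝ} (hx : x ∈ Set.Ico (0:ℝ) 2) : fAux (x : AddCircle (2:ℝ)) = gAux x := by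
  have : fAux (x : AddCircle (2:ℝ)) = AddCircle.liftIco 2 0 gAux x := rfl
  rw [this, AddCircle.liftIco_coe_apply (by simpa using hx)]

private lemma hasSum0 : HasSum (fun n : ℤ => rAux n) ((Real.exp (-1) + Real.exp 1) / 2) := by
  have H := has_pointwise_sum_fourier_series_of_summable summ ((0:ℝ) : AddCircle (2:ℝ))
  have hf0 : fAux ((0:ℝ) : AddCircle (2:ℝ)) = (((Real.exp (-1) + Real.exp 1) / 2 : ℝ) : ℂ) := by
    rw [fAux_apply (by norm_num)]
    unfold gAux
    push_cast
    norm_num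
  rw [hf0] at H
  rw [← Complex.hasSum_ofReal]
  apply H.congr_fun
  intro n
  rw [key_coeff_real]
  have : (fourier n) (((0:ℝ) : AddCircle (2:ℝ))) = 1 := by
    rw [fourier_coe_apply]
    norm_num
  rw [this, smul_eq_mul, mul_one]

private lemma hasSum1 : HasSum (fun n : ℤ => rAux n * (-1:ℝ)^n) 1 := by
  have H := has_pointwise_sum_fourier_series_of_summable summ ((1:ℝ) : AddCircle (2:ℝ))
  have hf1 : fAux ((1:ℝ) : AddCircle (2:ℝ)) = 1 := by
    rw [fAux_apply (by norm_num)]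
    unfold gAux
    norm_num
  rw [hf1] at H
  rw [← Complex.hasSum_ofReal]
  push_cast
  apply H.congr_fun
  intro n
  rw [key_coeff_real]
  have : (fourier n) (((1:ℝ) : AddCircle (2:ℝ))) = (-1:ℂ)^n := by
    rw [fourier_coe_apply]
    rw [show 2*(π:ℂ)*Complex.I*(n:ℂ)*(1:ℝ)/((2:ℝ):ℂ) = (n:ℂ) * ((π:ℂ)*Complex.I) by push_cast; ring]
    rw [Complex.exp_int_mul, Complex.exp_pi_mul_I]
  rw [this, smul_eq_mul]

private lemma hasSumOdd :
    HasSum (fun k : ℤ => 1 / ((2 * (k : ℝ) + 1) ^ 2 * π ^ 2 + 1))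
      ((Real.exp (-1) + Real.exp 1 - 2) / (2 * (Real.exp 1 - Real.exp (-1)))) := by
  have hC : 0 < Real.exp 1 - Real.exp (-1) := by
    have := Real.exp_lt_exp.2 (show (-1:ℝ) < 1 by norm_num)
    linarith
  have H2 : HasSum (fun n : ℤ => (rAux n - rAux n * (-1:ℝ)^n) / 2)
      (((Real.exp (-1) + Real.exp 1) / 2 - 1) / 2) := (hasSum0.sub hasSum1).div_const 2
  have hi : Function.Injective (fun k : ℤ => 2 * k + 1) := by
    intro a b h
    have h' : 2 * a + 1 = 2 * b + 1 := h
    omega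
  have H3 : HasSum ((fun n : ℤ => (rAux n - rAux n * (-1:ℝ)^n) / 2) ∘ (fun k : ℤ => 2 * k + 1))
      (((Real.exp (-1) + Real.exp 1) / 2 - 1) / 2) := by
    apply (Function.Injective.hasSum_iff hi ?_).2 H2
    intro n hn
    have he : Even n := by
      rcases Int.even_or_odd n with h | h
      · exact h
      · obtain ⟨m, hm⟩ := h
        exact absurd ⟨m, show 2 * m + 1 = n by omega⟩ hn
    simp [he.neg_one_zpow]
  have H4 := H3.mul_right (2 / (Real.exp 1 - Real.exp (-1)))
  have hval : (((Real.exp (-1) + Real.exp 1) / 2 - 1) / 2) * (2 / (Real.exp 1 - Real.exp (-1)))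
      = (Real.exp (-1) + Real.exp 1 - 2) / (2 * (Real.exp 1 - Real.exp (-1))) := by
    field_simp
  rw [hval] at H4
  apply H4.congr_fun
  intro k
  have hD : (0:ℝ) < 1 + ((2*k+1 : ℤ):ℝ)^2 * π^2 := by positivity
  have hodd : Odd (2*k+1 : ℤ) := ⟨k, by ring⟩
  simp only [Function.comp_apply, hodd.neg_one_zpow]
  unfold rAux
  have h1 : ((2*(k:ℝ)+1)^2*π^2+1) ≠ 0 := by positivity
  have hD2 : ((1:ℝ) + (2*(k:ℝ)+1)^2*π^2) ≠ 0 := by positivity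
  push_cast
  field_simp
  ring

end StmtAux

/-- The identity 1/(2(e^{-1}+1)) = 1/(2(e+1)) + ∑_{k ∈ ℤ} 1/((2k+1)²π² + 1). -/
theorem stmt_5 :
    1 / (2 * (Real.exp (-1) + 1)) =
      1 / (2 * (Real.exp 1 + 1)) +
        ∑' k : ℤ, 1 / ((2 * (k : ℝ) + 1) ^ 2 * Real.pi ^ 2 + 1) := by
  rw [hasSumOdd.tsum_eq]
  have hu : (0:ℝ) < Real.exp 1 := Real.exp_pos 1
  have h1 : 1 < Real.exp 1 := by nlinarith [Real.add_one_le_exp 1]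
  rw [Real.exp_neg]
  have h2 : (Real.exp 1)⁻¹ < 1 := by
    have hh : (Real.exp 1)⁻¹ * Real.exp 1 = 1 := inv_mul_cancel₀ hu.ne'
    nlinarith [inv_pos.2 hu]
  have h3 : Real.exp 1 - (Real.exp 1)⁻¹ ≠ 0 :=
    sub_ne_zero.2 (lt_trans h2 h1).ne'
  have h4 : (Real.exp 1)⁻¹ + 1 ≠ 0 := by positivity
  have h5 : Real.exp 1 + 1 ≠ 0 := by positivity
  have h6 : (-2 + Real.exp 1 ^ 2 * 2) ≠ 0 := by nlinarith
  field_simp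
  have h7 : (2*(Real.exp 1 * Real.exp 1 - 1)) ≠ 0 := by nlinarith
  field_simp [h7]
  have h8 : (Real.exp 1 ^ 2 - 1) ≠ 0 := by nlinarith
  field_simp [h8]
  ring
end

section
/- On the circle |w - 1| = R with R = 4mπ for a positive integer m, the function g(w) = 1/(w(w-2)(e^{w-1}+1)) satisfies |g(w)| ≤ c/R² for some constant c independent of m. -/
open Complex Filter Real

lemma exp_lb_aux (m : ℕ) (hm : 0 < m) (z : ℂ) (hz : ‖z‖ = 4 * m * Real.pi) :
    (1:ℝ)/2 ≤ ‖Complex.exp z + 1‖ := by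
  have hpi := Real.pi_gt_three
  have hm1 : (1:ℝ) ≤ m := by exact_mod_cast hm
  have hR : 4 * Real.pi ≤ 4 * m * Real.pi := by nlinarith
  set x := z.re with hx
  set y := z.im with hy
  have hexp : ‖Complex.exp z‖ = Real.exp x := Complex.norm_exp z
  rcases le_or_gt 1 x with hx1 | hx1
  · -- x ≥ 1
    have h2 : (2:ℝ) ≤ Real.exp x := by
      have := Real.add_one_le_exp (1:ℝ)
      have hmono := Real.exp_le_exp.mpr hx1
      linarith
    have htri : ‖Complex.exp z‖ ≤ ‖Complex.exp z + 1‖ + ‖(1:ℂ)‖ := by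
      calc ‖Complex.exp z‖ = ‖(Complex.exp z + 1) - 1‖ := by ring_nf
        _ ≤ ‖Complex.exp z + 1‖ + ‖(1:ℂ)‖ := norm_sub_le _ _
    simp only [norm_one] at htri
    linarith [hexp ▸ htri]
  rcases le_or_gt x (-1) with hx2 | hx2
  · -- x ≤ -1
    have h2 : Real.exp x ≤ 1/2 := by
      have h3 : Real.exp x ≤ Real.exp (-1) := Real.exp_le_exp.mpr hx2
      have h4 : Real.exp (-1) = (Real.exp 1)⁻¹ := by rw [Real.exp_neg]
      have h5 : (2:ℝ) ≤ Real.exp 1 := by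
        have := Real.add_one_le_exp (1:ℝ); linarith
      have h6 : (Real.exp 1)⁻¹ ≤ (2:ℝ)⁻¹ := by
        apply inv_anti₀ <;> linarith
      rw [h4] at h3; norm_num at h6 ⊢; linarith
    have htri : (1:ℝ) ≤ ‖Complex.exp z + 1‖ + ‖Complex.exp z‖ := by
      have h7 := norm_sub_le (Complex.exp z + 1) (Complex.exp z)
      simpa using h7
    rw [hexp] at htri
    linarith
  · -- |x| ≤ 1: show cos y ≥ 0 and conclude ‖exp z + 1‖ ≥ 1
    set R := 4 * (m:ℝ) * Real.pi with hRdef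
    have hR4 : (12:ℝ) ≤ R := by nlinarith
    have hnsq : x^2 + y^2 = R^2 := by
      have := Complex.sq_norm z
      rw [Complex.normSq_apply] at this
      have hz2 : ‖z‖ = R := hz
      nlinarith [this, hz2]
    have hx2' : x^2 ≤ 1 := by nlinarith
    set t := |y| with ht
    have ht0 : 0 ≤ t := abs_nonneg y
    have htsq : t^2 = y^2 := sq_abs y
    have htleR : t ≤ R := by nlinarith
    have htge : R - Real.pi/2 ≤ t := by nlinarith
    have hcos : 0 ≤ Real.cos y := by
      have h1 : Real.cos y = Real.cos t := (Real.cos_abs y).symm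
      have h2 := Real.cos_sub_int_mul_two_pi t (2*m)
      have h3 : t - ((2*(m:ℕ) : ℤ) : ℝ) * (2*Real.pi) = t - R := by
        push_cast; ring
      rw [h3] at h2
      rw [h1, ← h2]
      apply Real.cos_nonneg_of_mem_Icc
      constructor
      · linarith
      · linarith
    -- ‖exp z + 1‖² = e^{2x} + 2 e^x cos y + 1 ≥ 1
    have hsq : 1 ≤ ‖Complex.exp z + 1‖^2 := by
      have h1 : ‖Complex.exp z + 1‖^2 = Complex.normSq (Complex.exp z + 1) := by
        rw [Complex.sq_norm]
      rw [h1, Complex.normSq_apply]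
      simp only [Complex.add_re, Complex.add_im, Complex.one_re, Complex.one_im,
        Complex.exp_re, Complex.exp_im]
      have hpyth := Real.sin_sq_add_cos_sq z.im
      have hepos : 0 < Real.exp z.re := Real.exp_pos z.re
      have hcos' : 0 ≤ Real.cos z.im := hcos
      have key : (Real.exp z.re * Real.cos z.im + 1) * (Real.exp z.re * Real.cos z.im + 1) +
          (Real.exp z.re * Real.sin z.im + 0) * (Real.exp z.re * Real.sin z.im + 0) =
          Real.exp z.re * Real.exp z.re * (Real.sin z.im ^ 2 + Real.cos z.im ^ 2) +
          2 * (Real.exp z.re * Real.cos z.im) + 1 := by ring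
      rw [key, hpyth]
      have h9 : 0 ≤ Real.exp z.re * Real.cos z.im := mul_nonneg hepos.le hcos'
      have h10 : 0 ≤ Real.exp z.re * Real.exp z.re := (mul_pos hepos hepos).le
      linarith
    nlinarith [norm_nonneg (Complex.exp z + 1), hsq]

/-- On circles |w - 1| = 4mπ (m a positive integer), g(w) = 1/(w(w-2)(e^{w-1}+1))
satisfies |g(w)| ≤ c/(4mπ)² for a constant c independent of m. -/
theorem stmt_6
    (g : ℂ → ℂ) (hg : ∀ w, g w = (w * (w - 2) * (Complex.exp (w - 1) + 1))⁻¹) :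
    ∃ c : ℝ, 0 < c ∧ ∀ m : ℕ, 0 < m → ∀ w : ℂ,
      ‖w - 1‖ = 4 * m * Real.pi → ‖g w‖ ≤ c / (4 * m * Real.pi) ^ 2 := by
  refine ⟨4, by norm_num, ?_⟩
  intro m hm w hw
  have hpi := Real.pi_gt_three
  have hm1 : (1:ℝ) ≤ m := by exact_mod_cast hm
  set R := 4 * (m:ℝ) * Real.pi with hRdef
  have hR12 : (12:ℝ) ≤ R := by nlinarith
  have hE := exp_lb_aux m hm (w - 1) hw
  have hw1 : R - 1 ≤ ‖w‖ := by
    have := norm_sub_norm_le (w - 1) (-1 : ℂ)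
    simp only [sub_neg_eq_add, sub_add_cancel, norm_neg, norm_one] at this
    rw [hw] at this; linarith
  have hw2 : R - 1 ≤ ‖w - 2‖ := by
    have := norm_sub_norm_le (w - 1) (1 : ℂ)
    have h2 : w - 1 - 1 = w - 2 := by ring
    rw [h2, norm_one, hw] at this; linarith
  rw [hg, norm_inv]
  have hA : R^2/4 ≤ ‖w * (w - 2) * (Complex.exp (w - 1) + 1)‖ := by
    rw [norm_mul, norm_mul]
    have h1 : (0:ℝ) ≤ R - 1 := by linarith
    calc R^2/4 ≤ (R-1) * (R-1) * (1/2) := by nlinarith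
      _ ≤ ‖w‖ * ‖w - 2‖ * ‖Complex.exp (w - 1) + 1‖ := by
          apply mul_le_mul (mul_le_mul hw1 hw2 h1 (norm_nonneg _)) hE (by norm_num)
          positivity
  have hApos : (0:ℝ) < R^2/4 := by positivity
  calc ‖w * (w - 2) * (Complex.exp (w - 1) + 1)‖⁻¹ ≤ (R^2/4)⁻¹ :=
        inv_anti₀ hApos hA
    _ = 4/R^2 := by rw [inv_div]
    _ = 4 / (4 * m * Real.pi)^2 := by rw [hRdef]
end
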